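/- Let Ω ⊆ ℝ² be open, let u : ℝ² → ℝ be twice continuously differentiable on Ω, and let γ : ℝ → Ω be a continuously differentiable curve with γ'(t) ≠ 0 for all t. Let P(x₁,x₂) = a + d₁x₁ + d₂x₂ − (c/2)(x₁² + x₂²) for constants a, d₁, d₂, c ∈ ℝ, and assume u(γ(t)) = P(γ(t)) for all t ∈ ℝ. Then the following are equivalent: (i) for all t, −∂₁∂₂u(γ(t))·(γ₁'(t)² − γ₂'(t)²) + (∂₁∂₁u(γ(t)) − ∂₂∂₂u(γ(t)))·γ₁'(t)·γ₂'(t) = 0 (i.e. γ is a Hessian eigencurve of u); (ii) the function t ↦ ‖∇(u − P)(γ(t))‖ is constant on ℝ. -/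

import Mathlib

set_option maxHeartbeats 4000000 in
/-- Lemma 2.2 (equivalence of the Hessian-eigencurve condition and constancy of
`‖∇(u−P)‖` along a curve on which `u = P`), where
`P(x₁,x₂) = a + d₁x₁ + d₂x₂ − (c/2)(x₁²+x₂²)`. -/
theorem capillary_curve_equivalence
    (Ω : Set (ℝ × ℝ)) (hΩ : IsOpen Ω)
    (u : ℝ × ℝ → ℝ) (hu : ContDiffOn ℝ 2 u Ω)
    (u1 u2 u11 u12 u22 : ℝ × ℝ → ℝ)
    (hu1 : ∀ p ∈ Ω, HasDerivAt (fun s => u (s, p.2)) (u1 p) p.1)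
    (hu2 : ∀ p ∈ Ω, HasDerivAt (fun s => u (p.1, s)) (u2 p) p.2)
    (hu11 : ∀ p ∈ Ω, HasDerivAt (fun s => u1 (s, p.2)) (u11 p) p.1)
    (hu12 : ∀ p ∈ Ω, HasDerivAt (fun s => u1 (p.1, s)) (u12 p) p.2)
    (hu22 : ∀ p ∈ Ω, HasDerivAt (fun s => u2 (p.1, s)) (u22 p) p.2)
    (γ : ℝ → ℝ × ℝ) (γ' : ℝ → ℝ × ℝ)
    (hγ : ∀ t, HasDerivAt γ (γ' t) t)
    (hγ'cont : Continuous γ')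
    (hγreg : ∀ t, γ' t ≠ 0)
    (hγΩ : ∀ t, γ t ∈ Ω)
    (a d1 d2 c : ℝ)
    (hP : ∀ t, u (γ t) = a + d1 * (γ t).1 + d2 * (γ t).2
        - c / 2 * ((γ t).1 ^ 2 + (γ t).2 ^ 2)) :
    (∀ t, -u12 (γ t) * ((γ' t).1 ^ 2 - (γ' t).2 ^ 2)
        + (u11 (γ t) - u22 (γ t)) * (γ' t).1 * (γ' t).2 = 0)
    ↔ (∀ t s : ℝ,
        Real.sqrt ((u1 (γ t) - (d1 - c * (γ t).1)) ^ 2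
            + (u2 (γ t) - (d2 - c * (γ t).2)) ^ 2)
      = Real.sqrt ((u1 (γ s) - (d1 - c * (γ s).1)) ^ 2
            + (u2 (γ s) - (d2 - c * (γ s).2)) ^ 2)) := by
  classical
  set F : ℝ × ℝ → (ℝ × ℝ) →L[ℝ] ℝ := fderiv ℝ u with hF
  set H : ℝ × ℝ → (ℝ × ℝ) →L[ℝ] (ℝ × ℝ) →L[ℝ] ℝ := fderiv ℝ F with hHdef
  -- differentiability facts
  have hca : ∀ p ∈ Ω, ContDiffAt ℝ 2 u p := fun p hp => hu.contDiffAt (hΩ.mem_nhds hp)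
  have hFd : ∀ p ∈ Ω, HasFDerivAt u (F p) p := fun p hp =>
    ((hca p hp).differentiableAt (by norm_num)).hasFDerivAt
  have hHd : ∀ p ∈ Ω, HasFDerivAt F (H p) p := fun p hp =>
    (((hca p hp).fderiv_right (m := 1) (by norm_num)).differentiableAt one_ne_zero).hasFDerivAt
  -- lines
  have hlineX : ∀ p : ℝ × ℝ, HasDerivAt (fun s : ℝ => (s, p.2)) ((1 : ℝ), (0 : ℝ)) p.1 :=
    fun p => (hasDerivAt_id p.1).prodMk (hasDerivAt_const _ _)
  have hlineY : ∀ p : ℝ × ℝ, HasDerivAt (fun s : ℝ => (p.1, s)) ((0 : ℝ), (1 : ℝ)) p.2 :=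
    fun p => (hasDerivAt_const _ _).prodMk (hasDerivAt_id p.2)
  -- first partials in terms of F
  have hu1F : ∀ p ∈ Ω, u1 p = F p (1, 0) := by
    intro p hp
    have h2 := HasFDerivAt.comp_hasDerivAt (l := u) (f := fun s : ℝ => (s, p.2)) p.1
      (by simpa using hFd p hp) (hlineX p)
    exact (hu1 p hp).unique h2
  have hu2F : ∀ p ∈ Ω, u2 p = F p (0, 1) := by
    intro p hp
    have h2 := HasFDerivAt.comp_hasDerivAt (l := u) (f := fun s : ℝ => (p.1, s)) p.2
      (by simpa using hFd p hp) (hlineY p)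
    exact (hu2 p hp).unique h2
  -- u1, u2 are differentiable on Ω with full derivatives
  have hu1d : ∀ p ∈ Ω, HasFDerivAt u1
      ((ContinuousLinearMap.apply ℝ ℝ (((1 : ℝ), (0 : ℝ)))).comp (H p)) p := by
    intro p hp
    have hev : HasFDerivAt (fun q => F q (1, 0))
        ((ContinuousLinearMap.apply ℝ ℝ (((1 : ℝ), (0 : ℝ)))).comp (H p)) p :=
      (ContinuousLinearMap.apply ℝ ℝ (((1 : ℝ), (0 : ℝ)))).hasFDerivAt.comp p (hHd p hp)
    refine hev.congr_of_eventuallyEq ?_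
    filter_upwards [hΩ.mem_nhds hp] with q hq using (hu1F q hq)
  have hu2d : ∀ p ∈ Ω, HasFDerivAt u2
      ((ContinuousLinearMap.apply ℝ ℝ (((0 : ℝ), (1 : ℝ)))).comp (H p)) p := by
    intro p hp
    have hev : HasFDerivAt (fun q => F q (0, 1))
        ((ContinuousLinearMap.apply ℝ ℝ (((0 : ℝ), (1 : ℝ)))).comp (H p)) p :=
      (ContinuousLinearMap.apply ℝ ℝ (((0 : ℝ), (1 : ℝ)))).hasFDerivAt.comp p (hHd p hp)
    refine hev.congr_of_eventuallyEq ?_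
    filter_upwards [hΩ.mem_nhds hp] with q hq using (hu2F q hq)
  -- second partials in terms of H
  have h11 : ∀ p ∈ Ω, u11 p = H p (1, 0) (1, 0) := by
    intro p hp
    have h2 := HasFDerivAt.comp_hasDerivAt (l := u1) (f := fun s : ℝ => (s, p.2)) p.1
      (by simpa using hu1d p hp) (hlineX p)
    simpa using (hu11 p hp).unique h2
  have h12 : ∀ p ∈ Ω, u12 p = H p (0, 1) (1, 0) := by
    intro p hp
    have h2 := HasFDerivAt.comp_hasDerivAt (l := u1) (f := fun s : ℝ => (p.1, s)) p.2
      (by simpa using hu1d p hp) (hlineY p)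
    simpa using (hu12 p hp).unique h2
  have h22 : ∀ p ∈ Ω, u22 p = H p (0, 1) (0, 1) := by
    intro p hp
    have h2 := HasFDerivAt.comp_hasDerivAt (l := u2) (f := fun s : ℝ => (p.1, s)) p.2
      (by simpa using hu2d p hp) (hlineY p)
    simpa using (hu22 p hp).unique h2
  have hsymm : ∀ p ∈ Ω, ∀ v w : ℝ × ℝ, H p v w = H p w v := by
    intro p hp v w
    have hev : ∀ᶠ y in nhds p, HasFDerivAt u (F y) y := by
      filter_upwards [hΩ.mem_nhds hp] with y hy using hFd y hy
    exact second_derivative_symmetric_of_eventually hev (hHd p hp) v w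
  -- decomposition of H p v applied to basis vectors
  have hHdec : ∀ p : ℝ × ℝ, ∀ v w : ℝ × ℝ,
      H p v w = v.1 * (H p (1,0) w) + v.2 * (H p (0,1) w) := by
    intro p v w
    have hv : v = v.1 • ((1:ℝ), (0:ℝ)) + v.2 • ((0:ℝ), (1:ℝ)) := by
      apply Prod.ext <;> simp
    calc H p v w = H p (v.1 • ((1:ℝ), (0:ℝ)) + v.2 • ((0:ℝ), (1:ℝ))) w := by rw [← hv]
      _ = v.1 * (H p (1,0) w) + v.2 * (H p (0,1) w) := by
          rw [map_add, map_smul, map_smul, ContinuousLinearMap.add_apply,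
            ContinuousLinearMap.smul_apply, ContinuousLinearMap.smul_apply,
            smul_eq_mul, smul_eq_mul]
  have hFdec : ∀ p : ℝ × ℝ, ∀ v : ℝ × ℝ,
      F p v = v.1 * (F p (1,0)) + v.2 * (F p (0,1)) := by
    intro p v
    have hv : v = v.1 • ((1:ℝ), (0:ℝ)) + v.2 • ((0:ℝ), (1:ℝ)) := by
      apply Prod.ext <;> simp
    calc F p v = F p (v.1 • ((1:ℝ), (0:ℝ)) + v.2 • ((0:ℝ), (1:ℝ))) := by rw [← hv]
      _ = v.1 * (F p (1,0)) + v.2 * (F p (0,1)) := by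
          rw [map_add, map_smul, map_smul, smul_eq_mul, smul_eq_mul]
  -- derivatives of the components of γ
  have hγ1 : ∀ t, HasDerivAt (fun t => (γ t).1) ((γ' t).1) t := by
    intro t
    have := HasFDerivAt.comp_hasDerivAt (l := fun q : ℝ × ℝ => q.1) t
      (hasFDerivAt_fst (p := γ t)) (hγ t)
    exact this
  have hγ2 : ∀ t, HasDerivAt (fun t => (γ t).2) ((γ' t).2) t := by
    intro t
    have := HasFDerivAt.comp_hasDerivAt (l := fun q : ℝ × ℝ => q.2) t
      (hasFDerivAt_snd (p := γ t)) (hγ t)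
    exact this
  -- chain rule along γ for u, u1, u2
  have huγ : ∀ t, HasDerivAt (fun t => u (γ t))
      ((γ' t).1 * u1 (γ t) + (γ' t).2 * u2 (γ t)) t := by
    intro t
    have h2 := HasFDerivAt.comp_hasDerivAt (l := u) t (hFd (γ t) (hγΩ t)) (hγ t)
    have : F (γ t) (γ' t) = (γ' t).1 * u1 (γ t) + (γ' t).2 * u2 (γ t) := by
      rw [hFdec, hu1F _ (hγΩ t), hu2F _ (hγΩ t)]
    rw [← this]
    exact h2
  have hu1γ : ∀ t, HasDerivAt (fun t => u1 (γ t))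
      ((γ' t).1 * u11 (γ t) + (γ' t).2 * u12 (γ t)) t := by
    intro t
    have h2 := HasFDerivAt.comp_hasDerivAt (l := u1) t (hu1d (γ t) (hγΩ t)) (hγ t)
    have hval : ((ContinuousLinearMap.apply ℝ ℝ (((1 : ℝ), (0 : ℝ)))).comp (H (γ t))) (γ' t)
        = (γ' t).1 * u11 (γ t) + (γ' t).2 * u12 (γ t) := by
      simp only [ContinuousLinearMap.comp_apply, ContinuousLinearMap.apply_apply]
      rw [hHdec, h11 _ (hγΩ t), h12 _ (hγΩ t)]
    rw [← hval]
    exact h2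
  have hu2γ : ∀ t, HasDerivAt (fun t => u2 (γ t))
      ((γ' t).1 * u12 (γ t) + (γ' t).2 * u22 (γ t)) t := by
    intro t
    have h2 := HasFDerivAt.comp_hasDerivAt (l := u2) t (hu2d (γ t) (hγΩ t)) (hγ t)
    have hval : ((ContinuousLinearMap.apply ℝ ℝ (((0 : ℝ), (1 : ℝ)))).comp (H (γ t))) (γ' t)
        = (γ' t).1 * u12 (γ t) + (γ' t).2 * u22 (γ t) := by
      simp only [ContinuousLinearMap.comp_apply, ContinuousLinearMap.apply_apply]
      rw [hHdec, h22 _ (hγΩ t), h12 _ (hγΩ t), hsymm _ (hγΩ t) (1,0) (0,1)]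
    rw [← hval]
    exact h2
  -- orthogonality : f1 * γ₁' + f2 * γ₂' = 0
  have horth : ∀ t, (u1 (γ t) - (d1 - c * (γ t).1)) * (γ' t).1
      + (u2 (γ t) - (d2 - c * (γ t).2)) * (γ' t).2 = 0 := by
    intro t
    have hq : HasDerivAt (fun t => a + d1 * (γ t).1 + d2 * (γ t).2
        - c / 2 * ((γ t).1 ^ 2 + (γ t).2 ^ 2))
        (d1 * (γ' t).1 + d2 * (γ' t).2
          - c / 2 * (2 * (γ t).1 * (γ' t).1 + 2 * (γ t).2 * (γ' t).2)) t := by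
      have h1 := (hγ1 t).const_mul d1
      have h2 := (hγ2 t).const_mul d2
      have h3 : HasDerivAt (fun t => ((γ t).1 ^ 2 + (γ t).2 ^ 2))
          (2 * (γ t).1 * (γ' t).1 + 2 * (γ t).2 * (γ' t).2) t := by
        have := ((hγ1 t).pow 2).add ((hγ2 t).pow 2)
        refine this.congr_deriv ?_
        ring
      have := (((hasDerivAt_const t a).add h1).add h2).sub (h3.const_mul (c / 2))
      refine this.congr_deriv ?_
      ring
    have hq' : HasDerivAt (fun t => u (γ t))
        (d1 * (γ' t).1 + d2 * (γ' t).2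
          - c / 2 * (2 * (γ t).1 * (γ' t).1 + 2 * (γ t).2 * (γ' t).2)) t := by
      refine hq.congr_of_eventuallyEq ?_
      exact Filter.Eventually.of_forall fun x => (hP x)
    have := (huγ t).unique hq'
    nlinarith [this]
  -- derivatives of f1, f2 along γ
  have hf1d : ∀ t, HasDerivAt (fun t => u1 (γ t) - (d1 - c * (γ t).1))
      ((γ' t).1 * u11 (γ t) + (γ' t).2 * u12 (γ t) + c * (γ' t).1) t := by
    intro t
    have := (hu1γ t).sub ((hasDerivAt_const t d1).sub ((hγ1 t).const_mul c))
    refine this.congr_deriv ?_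
    ring
  have hf2d : ∀ t, HasDerivAt (fun t => u2 (γ t) - (d2 - c * (γ t).2))
      ((γ' t).1 * u12 (γ t) + (γ' t).2 * u22 (γ t) + c * (γ' t).2) t := by
    intro t
    have := (hu2γ t).sub ((hasDerivAt_const t d2).sub ((hγ2 t).const_mul c))
    refine this.congr_deriv ?_
    ring
  -- the squared norm g and its derivative
  have hgd : ∀ t, HasDerivAt (fun t => (u1 (γ t) - (d1 - c * (γ t).1)) ^ 2
      + (u2 (γ t) - (d2 - c * (γ t).2)) ^ 2)
      (2 * (u1 (γ t) - (d1 - c * (γ t).1))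
          * ((γ' t).1 * u11 (γ t) + (γ' t).2 * u12 (γ t) + c * (γ' t).1)
        + 2 * (u2 (γ t) - (d2 - c * (γ t).2))
          * ((γ' t).1 * u12 (γ t) + (γ' t).2 * u22 (γ t) + c * (γ' t).2)) t := by
    intro t
    have := ((hf1d t).pow 2).add ((hf2d t).pow 2)
    refine this.congr_deriv ?_
    ring
  have hs : ∀ t, (γ' t).1 ^ 2 + (γ' t).2 ^ 2 ≠ 0 := by
    intro t h
    apply hγreg t
    have h1 : (γ' t).1 = 0 := by nlinarith [sq_nonneg (γ' t).1, sq_nonneg (γ' t).2]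
    have h2 : (γ' t).2 = 0 := by nlinarith [sq_nonneg (γ' t).1, sq_nonneg (γ' t).2]
    exact Prod.ext h1 h2
  constructor
  · -- (i) → (ii)
    intro hE t s
    have hg0 : ∀ t, HasDerivAt (fun t => (u1 (γ t) - (d1 - c * (γ t).1)) ^ 2
        + (u2 (γ t) - (d2 - c * (γ t).2)) ^ 2) 0 t := by
      intro t
      have hEt := hE t
      have hor := horth t
      set f1 := u1 (γ t) - (d1 - c * (γ t).1) with hf1
      set f2 := u2 (γ t) - (d2 - c * (γ t).2) with hf2
      set A := u11 (γ t); set B := u12 (γ t); set C := u22 (γ t)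
      set x := (γ' t).1; set y := (γ' t).2
      have hT : (f1 * (A * x + B * y) + f2 * (B * x + C * y)) * (x ^ 2 + y ^ 2) = 0 := by
        linear_combination (A * x ^ 2 + 2 * B * x * y + C * y ^ 2) * hor
          - (f2 * x - f1 * y) * hEt
      have hT0 : f1 * (A * x + B * y) + f2 * (B * x + C * y) = 0 :=
        (mul_eq_zero.mp hT).resolve_right (hs t)
      have : (2 * f1 * (x * A + y * B + c * x) + 2 * f2 * (x * B + y * C + c * y)) = 0 := by
        linear_combination 2 * hT0 + 2 * c * hor
      have hgg := hgd t
      rw [show (0 : ℝ) = 2 * f1 * (x * u11 (γ t) + y * u12 (γ t) + c * x)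
          + 2 * f2 * (x * u12 (γ t) + y * u22 (γ t) + c * y) by linarith [this]]
      exact hgg
    have hconst := is_const_of_deriv_eq_zero (f := fun t => (u1 (γ t) - (d1 - c * (γ t).1)) ^ 2
        + (u2 (γ t) - (d2 - c * (γ t).2)) ^ 2)
      (fun x => (hg0 x).differentiableAt) (fun x => (hg0 x).deriv) t s
    exact congrArg Real.sqrt hconst
  · -- (ii) → (i)
    intro hsq t
    have hgconst : ∀ x y : ℝ, (u1 (γ x) - (d1 - c * (γ x).1)) ^ 2
        + (u2 (γ x) - (d2 - c * (γ x).2)) ^ 2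
        = (u1 (γ y) - (d1 - c * (γ y).1)) ^ 2 + (u2 (γ y) - (d2 - c * (γ y).2)) ^ 2 :=
      fun x y => (Real.sqrt_inj (by positivity) (by positivity)).mp (hsq x y)
    have hg'0 : ∀ x, 2 * (u1 (γ x) - (d1 - c * (γ x).1))
          * ((γ' x).1 * u11 (γ x) + (γ' x).2 * u12 (γ x) + c * (γ' x).1)
        + 2 * (u2 (γ x) - (d2 - c * (γ x).2))
          * ((γ' x).1 * u12 (γ x) + (γ' x).2 * u22 (γ x) + c * (γ' x).2) = 0 := by
      intro x
      have hc : HasDerivAt (fun x => (u1 (γ x) - (d1 - c * (γ x).1)) ^ 2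
          + (u2 (γ x) - (d2 - c * (γ x).2)) ^ 2) 0 x := by
        have := hasDerivAt_const x ((u1 (γ 0) - (d1 - c * (γ 0).1)) ^ 2
          + (u2 (γ 0) - (d2 - c * (γ 0).2)) ^ 2)
        exact this.congr_of_eventuallyEq (Filter.Eventually.of_forall fun y => hgconst y 0)
      exact (hgd x).unique hc
    by_cases hzero : (u1 (γ 0) - (d1 - c * (γ 0).1)) ^ 2 + (u2 (γ 0) - (d2 - c * (γ 0).2)) ^ 2 = 0
    · -- case ∇v ≡ 0 along γ
      have hf10 : ∀ x, u1 (γ x) - (d1 - c * (γ x).1) = 0 := by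
        intro x
        have hgx := hgconst x 0
        have h1 : (u1 (γ x) - (d1 - c * (γ x).1)) ^ 2 = 0 := by
          nlinarith [sq_nonneg (u1 (γ x) - (d1 - c * (γ x).1)),
            sq_nonneg (u2 (γ x) - (d2 - c * (γ x).2))]
        exact pow_eq_zero_iff two_ne_zero |>.mp h1
      have hf20 : ∀ x, u2 (γ x) - (d2 - c * (γ x).2) = 0 := by
        intro x
        have hgx := hgconst x 0
        have h1 : (u2 (γ x) - (d2 - c * (γ x).2)) ^ 2 = 0 := by
          nlinarith [sq_nonneg (u1 (γ x) - (d1 - c * (γ x).1)),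
            sq_nonneg (u2 (γ x) - (d2 - c * (γ x).2))]
        exact pow_eq_zero_iff two_ne_zero |>.mp h1
      have hd1 : (γ' t).1 * u11 (γ t) + (γ' t).2 * u12 (γ t) + c * (γ' t).1 = 0 := by
        have hc : HasDerivAt (fun x => u1 (γ x) - (d1 - c * (γ x).1)) 0 t :=
          (hasDerivAt_const t 0).congr_of_eventuallyEq
            (Filter.Eventually.of_forall fun y => hf10 y)
        exact (hf1d t).unique hc
      have hd2 : (γ' t).1 * u12 (γ t) + (γ' t).2 * u22 (γ t) + c * (γ' t).2 = 0 := by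
        have hc : HasDerivAt (fun x => u2 (γ x) - (d2 - c * (γ x).2)) 0 t :=
          (hasDerivAt_const t 0).congr_of_eventuallyEq
            (Filter.Eventually.of_forall fun y => hf20 y)
        exact (hf2d t).unique hc
      linear_combination (γ' t).2 * hd1 - (γ' t).1 * hd2
    · -- case ∇v never 0 along γ
      have hor := horth t
      have hT := hg'0 t
      set f1 := u1 (γ t) - (d1 - c * (γ t).1) with hf1
      set f2 := u2 (γ t) - (d2 - c * (γ t).2) with hf2
      set A := u11 (γ t); set B := u12 (γ t); set C := u22 (γ t)
      set x := (γ' t).1; set y := (γ' t).2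
      have hgt : f1 ^ 2 + f2 ^ 2 ≠ 0 := by
        rw [hgconst t 0]; exact hzero
      have hm : (f2 * x - f1 * y) ≠ 0 := by
        intro hm0
        apply hgt
        have hsy := hs t
        have h1 : (f1 ^ 2 + f2 ^ 2) * (x ^ 2 + y ^ 2) = 0 := by
          linear_combination (f1 * x + f2 * y) * hor + (f2 * x - f1 * y) * hm0
        exact (mul_eq_zero.mp h1).resolve_right hsy
      have hT0 : f1 * (A * x + B * y) + f2 * (B * x + C * y) = 0 := by
        linear_combination hT / 2 - c * hor
      have hmE : (f2 * x - f1 * y) * (-B * (x ^ 2 - y ^ 2) + (A - C) * x * y) = 0 := by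
        linear_combination (A * x ^ 2 + 2 * B * x * y + C * y ^ 2) * hor
          - (x ^ 2 + y ^ 2) * hT0
      exact (mul_eq_zero.mp hmE).resolve_left hm
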